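/- arXiv:1907.04522 — 2 statements merged into one kernel-verified Lean document; each statement's English description precedes it below -/
import Mathlib

section
/- Let $v$ be a real place. The archimedean gamma matrix identity holds: for $\delta, \xi \in \{\pm 1\}$, the function $G(\underline s,\delta,\xi) := \frac{1}{2^{1/2}\cdot 4}\sum_{\eta \in \{\pm 1\}} \alpha(-\eta)\,\gamma(s_2, \delta\eta)\,\gamma(s_1+s_2-\tfrac{1}{2}, \eta\xi)$ equals the corresponding entry of $2^{1-s_1-2s_2}\pi^{\frac{1}{2}-s_1-2s_2}\Gamma(s_2)\Gamma(s_1+s_2-\tfrac{1}{2})\begin{pmatrix} \sin\pi(\frac{s_1}{2}+s_2) & \cos\frac{\pi s_1}{2} \\ \sin\frac{\pi s_1}{2} & \cos\pi(\frac{s_1}{2}+s_2)\end{pmatrix}$, where rows are indexed by $\delta = 1, -1$ and columns by $\xi = 1, -1$. -/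
open Complex

/-- The real local gamma factor: `γ(s, 1) = 2(2π)^{-s}Γ(s)e^{iπs/2}` and
`γ(s, -1) = 2(2π)^{-s}Γ(s)e^{-iπs/2}`, encoded uniformly for `ε = ±1`. -/
noncomputable def gammaR (s : ℂ) (ε : ℤ) : ℂ :=
  2 * (2 * (Real.pi : ℂ)) ^ (-s) * Complex.Gamma s *
    Complex.exp ((ε : ℂ) * Real.pi * Complex.I * s / 2)

/-- The Weil constants `α(1) = e^{iπ/4}`, `α(-1) = e^{-iπ/4}` for the additive
character `e^{2πix}` of `ℝ`. -/
noncomputable def weilConst (ε : ℤ) : ℂ := Complex.exp ((ε : ℂ) * Real.pi * Complex.I / 4)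

/-- `G(s,δ,ξ) = (1/(2^{1/2}·4)) ∑_{η=±1} α(-η) γ(s₂,δη) γ(s₁+s₂-1/2,ηξ)`. -/
noncomputable def Gfac (s₁ s₂ : ℂ) (δ ξ : ℤ) : ℂ :=
  (1 / ((Real.sqrt 2 : ℂ) * 4)) * ∑ η ∈ ({1, -1} : Finset ℤ),
    weilConst (-η) * gammaR s₂ (δ * η) * gammaR (s₁ + s₂ - 1 / 2) (η * ξ)

lemma twocos (θ : ℂ) : Complex.exp (θ * I) + Complex.exp (-θ * I) = 2 * Complex.cos θ := by
  rw [Complex.cos]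
  ring_nf

lemma hsqrt2 : (Real.sqrt 2 : ℂ) = (2 : ℂ) ^ ((1:ℂ)/2) := by
  rw [Real.sqrt_eq_rpow, Complex.ofReal_cpow (by norm_num : (0:ℝ) ≤ 2)]
  norm_num

lemma Gfac_eq (s₁ s₂ : ℂ) (δ ξ : ℤ) :
    Gfac s₁ s₂ δ ξ = (2 : ℂ) ^ (1 - s₁ - 2 * s₂) * (Real.pi : ℂ) ^ ((1 : ℂ) / 2 - s₁ - 2 * s₂) *
      Complex.Gamma s₂ * Complex.Gamma (s₁ + s₂ - 1 / 2) *
      Complex.cos ((Real.pi : ℂ) * ((δ:ℂ) * s₂ + (ξ:ℂ) * (s₁ + s₂ - 1/2)) / 2 - Real.pi / 4) := by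
  set w : ℂ := s₁ + s₂ - 1/2 with hw
  set θ : ℂ := (Real.pi : ℂ) * ((δ:ℂ) * s₂ + (ξ:ℂ) * w) / 2 - Real.pi / 4 with hθ
  set A : ℂ := (2 * (Real.pi:ℂ)) ^ (-s₂) with hA
  set B : ℂ := (2 * (Real.pi:ℂ)) ^ (-w) with hB
  have hexp1 : Complex.exp (-(1:ℂ) * Real.pi * I / 4) *
      Complex.exp ((δ:ℂ) * 1 * Real.pi * I * s₂ / 2) *
      Complex.exp ((1:ℂ) * (ξ:ℂ) * Real.pi * I * w / 2) = Complex.exp (θ * I) := by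
    rw [← Complex.exp_add, ← Complex.exp_add]
    congr 1
    rw [hθ]; ring
  have hexp2 : Complex.exp ((1:ℂ) * Real.pi * I / 4) *
      Complex.exp ((δ:ℂ) * (-1) * Real.pi * I * s₂ / 2) *
      Complex.exp ((-1:ℂ) * (ξ:ℂ) * Real.pi * I * w / 2) = Complex.exp (-θ * I) := by
    rw [← Complex.exp_add, ← Complex.exp_add]
    congr 1
    rw [hθ]; ring
  have hsum : ∑ η ∈ ({1, -1} : Finset ℤ),
      weilConst (-η) * gammaR s₂ (δ * η) * gammaR w (η * ξ)
      = 4 * A * B * Complex.Gamma s₂ * Complex.Gamma w *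
        (Complex.exp (θ * I) + Complex.exp (-θ * I)) := by
    rw [Finset.sum_insert (by decide), Finset.sum_singleton]
    unfold weilConst gammaR
    push_cast
    rw [← hA, ← hB]
    calc Complex.exp (-(1:ℂ) * Real.pi * I / 4) *
          (2 * A * Complex.Gamma s₂ * Complex.exp ((δ:ℂ) * 1 * Real.pi * I * s₂ / 2)) *
          (2 * B * Complex.Gamma w * Complex.exp ((1:ℂ) * (ξ:ℂ) * Real.pi * I * w / 2)) +
        Complex.exp ((1:ℂ) * Real.pi * I / 4) *
          (2 * A * Complex.Gamma s₂ * Complex.exp ((δ:ℂ) * (-1) * Real.pi * I * s₂ / 2)) *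
          (2 * B * Complex.Gamma w * Complex.exp ((-1:ℂ) * (ξ:ℂ) * Real.pi * I * w / 2))
        = 4 * A * B * Complex.Gamma s₂ * Complex.Gamma w *
            (Complex.exp (-(1:ℂ) * Real.pi * I / 4) *
              Complex.exp ((δ:ℂ) * 1 * Real.pi * I * s₂ / 2) *
              Complex.exp ((1:ℂ) * (ξ:ℂ) * Real.pi * I * w / 2)) +
          4 * A * B * Complex.Gamma s₂ * Complex.Gamma w *
            (Complex.exp ((1:ℂ) * Real.pi * I / 4) *
              Complex.exp ((δ:ℂ) * (-1) * Real.pi * I * s₂ / 2) *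
              Complex.exp ((-1:ℂ) * (ξ:ℂ) * Real.pi * I * w / 2)) := by ring
      _ = _ := by rw [hexp1, hexp2]; ring
  rw [Gfac, ← hw, hsum, twocos]
  have hpi0 : (2 * (Real.pi:ℂ)) ≠ 0 :=
    mul_ne_zero two_ne_zero (Complex.ofReal_ne_zero.mpr Real.pi_ne_zero)
  have e1 : A * B = (2 * (Real.pi:ℂ)) ^ (-s₂ + -w) := by
    rw [hA, hB, ← Complex.cpow_add _ _ hpi0]
  have e2 : (2 * (Real.pi:ℂ)) ^ (-s₂ + -w) = (2:ℂ) ^ (-s₂ + -w) * (Real.pi:ℂ) ^ (-s₂ + -w) := by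
    have := mul_cpow_ofReal_nonneg (by norm_num : (0:ℝ) ≤ 2) Real.pi_pos.le (-s₂ + -w)
    push_cast at this
    exact this
  have e3 : (Real.pi:ℂ) ^ (-s₂ + -w) = (Real.pi : ℂ) ^ ((1 : ℂ) / 2 - s₁ - 2 * s₂) := by
    congr 1; rw [hw]; ring
  have e4 : (Real.sqrt 2 : ℂ) * ((2:ℂ) ^ (-s₂ + -w)) = (2 : ℂ) ^ (1 - s₁ - 2 * s₂) := by
    rw [hsqrt2, ← Complex.cpow_add _ _ (by norm_num : (2:ℂ) ≠ 0)]
    congr 1; rw [hw]; ring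
  have hs2 : (Real.sqrt 2 : ℂ) * (Real.sqrt 2 : ℂ) = 2 := by
    rw [← Complex.ofReal_mul, Real.mul_self_sqrt (by norm_num)]
    norm_num
  have hs : (Real.sqrt 2 : ℂ) ≠ 0 :=
    Complex.ofReal_ne_zero.mpr (ne_of_gt (Real.sqrt_pos.mpr (by norm_num)))
  have h24 : (1 / ((Real.sqrt 2 : ℂ) * 4)) * 4 * 2 = (Real.sqrt 2 : ℂ) := by
    field_simp
    linear_combination (-1 : ℂ) * hs2
  calc (1 / ((Real.sqrt 2 : ℂ) * 4)) *
      (4 * A * B * Complex.Gamma s₂ * Complex.Gamma w * (2 * Complex.cos θ))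
      = ((1 / ((Real.sqrt 2 : ℂ) * 4)) * 4 * 2) * (A * B) * Complex.Gamma s₂ *
        Complex.Gamma w * Complex.cos θ := by ring
    _ = ((Real.sqrt 2 : ℂ) * ((2:ℂ) ^ (-s₂ + -w))) * ((Real.pi:ℂ) ^ (-s₂ + -w)) *
        Complex.Gamma s₂ * Complex.Gamma w * Complex.cos θ := by rw [h24, e1, e2]; ring
    _ = _ := by rw [e4, e3]

/-- the archimedean gamma-matrix identity (formula (2.10) of the paper):
the matrix `(G(s,δ,ξ))_{δ,ξ=±1}` equals
`2^{1-s₁-2s₂} π^{1/2-s₁-2s₂} Γ(s₂) Γ(s₁+s₂-1/2)`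
times `[[sin π(s₁/2+s₂), cos(πs₁/2)], [sin(πs₁/2), cos π(s₁/2+s₂)]]`. -/
theorem stmt_3 (s₁ s₂ : ℂ) :
    let C : ℂ := (2 : ℂ) ^ (1 - s₁ - 2 * s₂) * (Real.pi : ℂ) ^ ((1 : ℂ) / 2 - s₁ - 2 * s₂) *
      Complex.Gamma s₂ * Complex.Gamma (s₁ + s₂ - 1 / 2)
    Gfac s₁ s₂ 1 1 = C * Complex.sin (Real.pi * (s₁ / 2 + s₂)) ∧
    Gfac s₁ s₂ 1 (-1) = C * Complex.cos (Real.pi * s₁ / 2) ∧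
    Gfac s₁ s₂ (-1) 1 = C * Complex.sin (Real.pi * s₁ / 2) ∧
    Gfac s₁ s₂ (-1) (-1) = C * Complex.cos (Real.pi * (s₁ / 2 + s₂)) := by
  intro C
  refine ⟨?_, ?_, ?_, ?_⟩ <;> rw [Gfac_eq] <;> push_cast
  · rw [show (Real.pi : ℂ) * (1 * s₂ + 1 * (s₁ + s₂ - 1/2)) / 2 - Real.pi / 4
        = -((Real.pi:ℂ)/2 - Real.pi * (s₁/2 + s₂)) by ring,
      Complex.cos_neg, Complex.cos_pi_div_two_sub]
  · rw [show (Real.pi : ℂ) * (1 * s₂ + -1 * (s₁ + s₂ - 1/2)) / 2 - Real.pi / 4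
        = -((Real.pi:ℂ) * s₁ / 2) by ring, Complex.cos_neg]
  · rw [show (Real.pi : ℂ) * (-1 * s₂ + 1 * (s₁ + s₂ - 1/2)) / 2 - Real.pi / 4
        = -((Real.pi:ℂ)/2 - Real.pi * s₁ / 2) by ring,
      Complex.cos_neg, Complex.cos_pi_div_two_sub]
  · rw [show (Real.pi : ℂ) * (-1 * s₂ + -1 * (s₁ + s₂ - 1/2)) / 2 - Real.pi / 4
        = -((Real.pi:ℂ) * (s₁/2 + s₂)) by ring, Complex.cos_neg]
end

section
/- Let $\phi : \mathbb{R} \to \mathbb{C}$ be a Schwartz function and $0 < t_2$. Then: (a) for $|a| \leq M$, $\int_{\mathbb{R}}|\phi(y+a)||y|^{t_2-1}dy \ll_{\phi,M,t_2} 1$; (b) for $|a| \geq M > 0$, $\int_{\mathbb{R}}|\phi(y+a)||y|^{t_2-1}dy \ll_{\phi,M}1 + |a|^{t_2-1/2}$ if $t_2 \geq 1$, and $\ll_{\phi,M} 1 + |a|^{t_2/2}$ if $0 < t_2 \leq 1$. Consequently, for Schwartz functions $\phi_1,\phi_2,\phi_3$ on $\mathbb{R}$ and real $t_1 > 1/2$,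 $t_2 > 0$ with $t_1 + t_2/2 > 1$, the integral $\int_{\mathbb{R}^3}|x_1|^{t_1-1}|x_{12}^2 - x_1x_2|^{t_2-1}|\phi_1(x_1)\phi_2(x_{12})\phi_3(x_2)|\,dx_1\,dx_{12}\,dx_2$ is finite. -/
open MeasureTheory

open scoped ENNReal

namespace Stmt16Aux

open Real Set

lemma measurable_rpow_const (s : ℝ) : Measurable fun x : ℝ => x ^ s := by measurability

lemma meas_ofReal_abs_rpow (s : ℝ) :
    Measurable fun x : ℝ => ENNReal.ofReal (|x| ^ s) :=
  ((measurable_rpow_const s).comp measurable_abs).ennreal_ofReal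

lemma meas_J (φ : SchwartzMap ℝ ℂ) (s : ℝ) :
    Measurable fun x : ℝ => ENNReal.ofReal ‖φ x‖ * ENNReal.ofReal (|x| ^ s) :=
  (φ.continuous.norm.measurable.ennreal_ofReal).mul (meas_ofReal_abs_rpow s)

lemma two_bound {q b c : ℝ} (hq : 0 ≤ q) (hb : 0 ≤ b) (hc : 0 ≤ c) :
    (b + c) ^ q ≤ 2 ^ q * (b ^ q + c ^ q) := by
  have h1 : b + c ≤ 2 * max b c := by
    rcases le_total b c with h | h
    · rw [max_eq_right h]; linarith
    · rw [max_eq_left h]; linarith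
  have h2 : (max b c) ^ q ≤ b ^ q + c ^ q := by
    rcases le_total b c with h | h
    · rw [max_eq_right h]
      exact le_add_of_nonneg_left (Real.rpow_nonneg hb q)
    · rw [max_eq_left h]
      exact le_add_of_nonneg_right (Real.rpow_nonneg hc q)
  calc (b + c) ^ q ≤ (2 * max b c) ^ q :=
        Real.rpow_le_rpow (by positivity) h1 hq
    _ = 2 ^ q * (max b c) ^ q :=
        Real.mul_rpow (by norm_num) (le_trans hb (le_max_left _ _))
    _ ≤ 2 ^ q * (b ^ q + c ^ q) :=
        mul_le_mul_of_nonneg_left h2 (Real.rpow_nonneg (by norm_num) q)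

lemma exists_bound (φ : SchwartzMap ℝ ℂ) : ∃ B : ℝ, ∀ x : ℝ, ‖φ x‖ ≤ B := by
  obtain ⟨C, -, hC⟩ := φ.decay 0 0
  refine ⟨C, fun x => ?_⟩
  have := hC x
  simpa [norm_iteratedFDeriv_zero] using this

/-- Finiteness of `∫⁻_{[-1,1]} |x|^s` for `s > -1`. -/
lemma K_lt_top {s : ℝ} (hs : -1 < s) :
    (∫⁻ x in Icc (-1 : ℝ) 1, ENNReal.ofReal (|x| ^ s)) < ⊤ := by
  have h1 : (∫⁻ x in Ioo (0 : ℝ) 1, ENNReal.ofReal (|x| ^ s)) < ⊤ := by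
    have hi : IntegrableOn (fun x : ℝ => x ^ s) (Ioo (0 : ℝ) 1) :=
      (intervalIntegral.integrableOn_Ioo_rpow_iff one_pos).2 hs
    have heq : (∫⁻ x in Ioo (0 : ℝ) 1, ENNReal.ofReal (|x| ^ s))
        = ∫⁻ x in Ioo (0 : ℝ) 1, ENNReal.ofReal (x ^ s) :=
      setLIntegral_congr_fun measurableSet_Ioo
        (fun x hx => by simp only [abs_of_pos hx.1])
    rw [heq]
    exact hi.setLIntegral_lt_top
  have h2 : (∫⁻ x in Ioo (-1 : ℝ) 0, ENNReal.ofReal (|x| ^ s)) < ⊤ := by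
    have hmeas : Measurable fun x : ℝ => ENNReal.ofReal (|x| ^ s) := meas_ofReal_abs_rpow s
    have hind : ∀ x : ℝ,
        (Ioo (-1 : ℝ) 0).indicator (fun x : ℝ => ENNReal.ofReal (|x| ^ s)) x
          = (Ioo (0 : ℝ) 1).indicator (fun x : ℝ => ENNReal.ofReal (|x| ^ s)) (-x) := by
      intro x
      by_cases hx : x ∈ Ioo (-1 : ℝ) 0
      · have hx' : -x ∈ Ioo (0 : ℝ) 1 := ⟨by linarith [hx.2], by linarith [hx.1]⟩
        rw [indicator_of_mem hx, indicator_of_mem hx']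
        simp [abs_neg]
      · have hx' : -x ∉ Ioo (0 : ℝ) 1 := by
          intro h
          exact hx ⟨by linarith [h.2], by linarith [h.1]⟩
        rw [indicator_of_notMem hx, indicator_of_notMem hx']
    have hneg : (∫⁻ x, (Ioo (0 : ℝ) 1).indicator
          (fun x : ℝ => ENNReal.ofReal (|x| ^ s)) (-x))
        = ∫⁻ x, (Ioo (0 : ℝ) 1).indicator (fun x : ℝ => ENNReal.ofReal (|x| ^ s)) x := by
      conv_rhs => rw [← Measure.map_neg_eq_self (volume : Measure ℝ)]
      exact (lintegral_map (hmeas.indicator measurableSet_Ioo) measurable_neg).symm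
    calc (∫⁻ x in Ioo (-1 : ℝ) 0, ENNReal.ofReal (|x| ^ s))
        = ∫⁻ x, (Ioo (-1 : ℝ) 0).indicator (fun x : ℝ => ENNReal.ofReal (|x| ^ s)) x :=
          (lintegral_indicator measurableSet_Ioo _).symm
      _ = ∫⁻ x, (Ioo (0 : ℝ) 1).indicator (fun x : ℝ => ENNReal.ofReal (|x| ^ s)) (-x) :=
          lintegral_congr hind
      _ = ∫⁻ x, (Ioo (0 : ℝ) 1).indicator (fun x : ℝ => ENNReal.ofReal (|x| ^ s)) x := hneg
      _ = ∫⁻ x in Ioo (0 : ℝ) 1, ENNReal.ofReal (|x| ^ s) :=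
          lintegral_indicator measurableSet_Ioo _
      _ < ⊤ := h1
  have hsub : Icc (-1 : ℝ) 1 ⊆ (Ioo (-1 : ℝ) 0 ∪ Ioo (0 : ℝ) 1) ∪ {-1, 0, 1} := by
    intro x hx
    rcases eq_or_ne x (-1) with h | h1'
    · exact Or.inr (by simp [h])
    rcases eq_or_ne x 0 with h | h2'
    · exact Or.inr (by simp [h])
    rcases eq_or_ne x 1 with h | h3'
    · exact Or.inr (by simp [h])
    rcases lt_or_gt_of_ne h2' with h | h
    · exact Or.inl (Or.inl ⟨lt_of_le_of_ne hx.1 (Ne.symm h1'), h⟩)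
    · exact Or.inl (Or.inr ⟨h, lt_of_le_of_ne hx.2 h3'⟩)
  have hnull : (∫⁻ x in ({-1, 0, 1} : Set ℝ), ENNReal.ofReal (|x| ^ s)) = 0 := by
    apply setLIntegral_measure_zero
    exact (Set.toFinite ({-1, 0, 1} : Set ℝ)).measure_zero volume
  calc (∫⁻ x in Icc (-1 : ℝ) 1, ENNReal.ofReal (|x| ^ s))
      ≤ ∫⁻ x in (Ioo (-1 : ℝ) 0 ∪ Ioo (0 : ℝ) 1) ∪ {-1, 0, 1},
          ENNReal.ofReal (|x| ^ s) := lintegral_mono_set hsub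
    _ ≤ (∫⁻ x in Ioo (-1 : ℝ) 0 ∪ Ioo (0 : ℝ) 1, ENNReal.ofReal (|x| ^ s))
          + ∫⁻ x in ({-1, 0, 1} : Set ℝ), ENNReal.ofReal (|x| ^ s) :=
        lintegral_union_le _ _ _
    _ ≤ ((∫⁻ x in Ioo (-1 : ℝ) 0, ENNReal.ofReal (|x| ^ s))
          + ∫⁻ x in Ioo (0 : ℝ) 1, ENNReal.ofReal (|x| ^ s)) + 0 := by
        rw [hnull]
        exact add_le_add_left (lintegral_union_le _ _ _) 0
    _ < ⊤ := by
        rw [add_zero]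
        exact ENNReal.add_lt_top.2 ⟨h2, h1⟩

/-- Finiteness of `∫⁻ ‖φ x‖ |x|^s dx` for Schwartz `φ` and `s > -1`. -/
lemma J_lt_top (φ : SchwartzMap ℝ ℂ) {s : ℝ} (hs : -1 < s) :
    (∫⁻ x : ℝ, ENNReal.ofReal ‖φ x‖ * ENNReal.ofReal (|x| ^ s)) < ⊤ := by
  obtain ⟨B, hB⟩ := exists_bound φ
  rw [← lintegral_add_compl (fun x : ℝ => ENNReal.ofReal ‖φ x‖ * ENNReal.ofReal (|x| ^ s))
    (measurableSet_Icc : MeasurableSet (Icc (-1 : ℝ) 1))]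
  refine ENNReal.add_lt_top.2 ⟨?_, ?_⟩
  · calc (∫⁻ x in Icc (-1 : ℝ) 1, ENNReal.ofReal ‖φ x‖ * ENNReal.ofReal (|x| ^ s))
        ≤ ∫⁻ x in Icc (-1 : ℝ) 1, ENNReal.ofReal B * ENNReal.ofReal (|x| ^ s) :=
          lintegral_mono fun x =>
            mul_le_mul_left (ENNReal.ofReal_le_ofReal (hB x)) _
      _ = ENNReal.ofReal B * ∫⁻ x in Icc (-1 : ℝ) 1, ENNReal.ofReal (|x| ^ s) :=
          lintegral_const_mul' _ _ ENNReal.ofReal_ne_top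
      _ < ⊤ := ENNReal.mul_lt_top ENNReal.ofReal_lt_top (K_lt_top hs)
  · set n := ⌈s⌉₊ with hn
    have hglobal : (∫⁻ x : ℝ, ENNReal.ofReal (‖x‖ ^ n * ‖φ x‖)) < ⊤ :=
      (φ.integrable_pow_mul volume n).lintegral_lt_top
    have hmeas : Measurable fun x : ℝ => ENNReal.ofReal (‖x‖ ^ n * ‖φ x‖) :=
      ((continuous_norm.pow n).mul φ.continuous.norm).measurable.ennreal_ofReal
    have hpt : ∀ x ∈ (Icc (-1 : ℝ) 1)ᶜ,
        ENNReal.ofReal ‖φ x‖ * ENNReal.ofReal (|x| ^ s)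
          ≤ ENNReal.ofReal (‖x‖ ^ n * ‖φ x‖) := by
      intro x hx
      have h1 : 1 < |x| := by
        simp only [mem_compl_iff, mem_Icc, not_and_or, not_le] at hx
        rcases hx with h | h
        · rw [abs_of_neg (by linarith)]; linarith
        · rw [abs_of_pos (by linarith)]; linarith
      have h2 : |x| ^ s ≤ |x| ^ (n : ℕ) := by
        calc |x| ^ s ≤ |x| ^ ((n : ℕ) : ℝ) :=
              Real.rpow_le_rpow_of_exponent_le h1.le (by rw [hn]; exact Nat.le_ceil s)
          _ = |x| ^ (n : ℕ) := Real.rpow_natCast _ _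
      calc ENNReal.ofReal ‖φ x‖ * ENNReal.ofReal (|x| ^ s)
          ≤ ENNReal.ofReal ‖φ x‖ * ENNReal.ofReal (|x| ^ (n : ℕ)) :=
            mul_le_mul_right (ENNReal.ofReal_le_ofReal h2) _
        _ = ENNReal.ofReal (‖x‖ ^ n * ‖φ x‖) := by
            rw [← ENNReal.ofReal_mul (norm_nonneg _), mul_comm, Real.norm_eq_abs]
    calc (∫⁻ x in (Icc (-1 : ℝ) 1)ᶜ, ENNReal.ofReal ‖φ x‖ * ENNReal.ofReal (|x| ^ s))
        ≤ ∫⁻ x in (Icc (-1 : ℝ) 1)ᶜ, ENNReal.ofReal (‖x‖ ^ n * ‖φ x‖) :=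
          setLIntegral_mono hmeas hpt
      _ ≤ ∫⁻ x : ℝ, ENNReal.ofReal (‖x‖ ^ n * ‖φ x‖) :=
          lintegral_mono' Measure.restrict_le_self le_rfl
      _ < ⊤ := hglobal

/-- The shifted lintegral. -/
noncomputable def G (φ : SchwartzMap ℝ ℂ) (t a : ℝ) : ℝ≥0∞ :=
  ∫⁻ y : ℝ, ENNReal.ofReal ‖φ (y + a)‖ * ENNReal.ofReal (|y| ^ (t - 1))

/-- Master bound: `G φ t a ≤ C (1 + |a|^{max (t-1) 0})` uniformly in `a`. -/
lemma master (φ : SchwartzMap ℝ ℂ) {t : ℝ} (ht : 0 < t) :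
    ∃ C : ℝ≥0∞, C ≠ ⊤ ∧ ∀ a : ℝ,
      G φ t a ≤ C * (1 + ENNReal.ofReal (|a| ^ max (t - 1) 0)) := by
  have hL : (∫⁻ x : ℝ, ENNReal.ofReal ‖φ x‖) < ⊤ :=
    ((φ.integrable (μ := volume)).norm).lintegral_lt_top
  rcases le_total t 1 with hle | hge
  · -- case t ≤ 1
    obtain ⟨B, hB⟩ := exists_bound φ
    refine ⟨ENNReal.ofReal B * (∫⁻ x in Icc (-1 : ℝ) 1, ENNReal.ofReal (|x| ^ (t - 1)))
      + ∫⁻ x : ℝ, ENNReal.ofReal ‖φ x‖, ?_, ?_⟩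
    · exact ENNReal.add_ne_top.2
        ⟨ENNReal.mul_ne_top ENNReal.ofReal_ne_top (K_lt_top (by linarith)).ne, hL.ne⟩
    · intro a
      have hsplit : G φ t a
          = (∫⁻ y in Icc (-1 : ℝ) 1,
              ENNReal.ofReal ‖φ (y + a)‖ * ENNReal.ofReal (|y| ^ (t - 1)))
            + ∫⁻ y in (Icc (-1 : ℝ) 1)ᶜ,
              ENNReal.ofReal ‖φ (y + a)‖ * ENNReal.ofReal (|y| ^ (t - 1)) := by
        rw [G, ← lintegral_add_compl _ (measurableSet_Icc : MeasurableSet (Icc (-1 : ℝ) 1))]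
      have hI1 : (∫⁻ y in Icc (-1 : ℝ) 1,
          ENNReal.ofReal ‖φ (y + a)‖ * ENNReal.ofReal (|y| ^ (t - 1)))
            ≤ ENNReal.ofReal B * ∫⁻ x in Icc (-1 : ℝ) 1, ENNReal.ofReal (|x| ^ (t - 1)) := by
        rw [← lintegral_const_mul' _ _ ENNReal.ofReal_ne_top]
        exact lintegral_mono fun y =>
          mul_le_mul_left (ENNReal.ofReal_le_ofReal (hB _)) _
      have hI2 : (∫⁻ y in (Icc (-1 : ℝ) 1)ᶜ,
          ENNReal.ofReal ‖φ (y + a)‖ * ENNReal.ofReal (|y| ^ (t - 1)))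
            ≤ ∫⁻ x : ℝ, ENNReal.ofReal ‖φ x‖ := by
        have hpt : ∀ y ∈ (Icc (-1 : ℝ) 1)ᶜ,
            ENNReal.ofReal ‖φ (y + a)‖ * ENNReal.ofReal (|y| ^ (t - 1))
              ≤ ENNReal.ofReal ‖φ (y + a)‖ := by
          intro y hy
          have h1 : 1 ≤ |y| := by
            simp only [mem_compl_iff, mem_Icc, not_and_or, not_le] at hy
            rcases hy with h | h
            · rw [abs_of_neg (by linarith)]; linarith
            · rw [abs_of_pos (by linarith)]; linarith
          have h2 : |y| ^ (t - 1) ≤ 1 :=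
            Real.rpow_le_one_of_one_le_of_nonpos h1 (by linarith)
          calc ENNReal.ofReal ‖φ (y + a)‖ * ENNReal.ofReal (|y| ^ (t - 1))
              ≤ ENNReal.ofReal ‖φ (y + a)‖ * 1 :=
                mul_le_mul_right (ENNReal.ofReal_le_one.2 h2) _
            _ = ENNReal.ofReal ‖φ (y + a)‖ := mul_one _
        calc (∫⁻ y in (Icc (-1 : ℝ) 1)ᶜ,
            ENNReal.ofReal ‖φ (y + a)‖ * ENNReal.ofReal (|y| ^ (t - 1)))
            ≤ ∫⁻ y in (Icc (-1 : ℝ) 1)ᶜ, ENNReal.ofReal ‖φ (y + a)‖ :=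
              setLIntegral_mono
                ((φ.continuous.comp (continuous_add_right a)).norm.measurable.ennreal_ofReal)
                hpt
          _ ≤ ∫⁻ y : ℝ, ENNReal.ofReal ‖φ (y + a)‖ :=
              lintegral_mono' Measure.restrict_le_self le_rfl
          _ = ∫⁻ x : ℝ, ENNReal.ofReal ‖φ x‖ :=
              lintegral_add_right_eq_self (fun u => ENNReal.ofReal ‖φ u‖) a
      calc G φ t a
          ≤ ENNReal.ofReal B * (∫⁻ x in Icc (-1 : ℝ) 1, ENNReal.ofReal (|x| ^ (t - 1)))
              + ∫⁻ x : ℝ, ENNReal.ofReal ‖φ x‖ := by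
            rw [hsplit]; exact add_le_add hI1 hI2
        _ = (ENNReal.ofReal B * (∫⁻ x in Icc (-1 : ℝ) 1, ENNReal.ofReal (|x| ^ (t - 1)))
              + ∫⁻ x : ℝ, ENNReal.ofReal ‖φ x‖) * 1 := (mul_one _).symm
        _ ≤ (ENNReal.ofReal B * (∫⁻ x in Icc (-1 : ℝ) 1, ENNReal.ofReal (|x| ^ (t - 1)))
              + ∫⁻ x : ℝ, ENNReal.ofReal ‖φ x‖)
            * (1 + ENNReal.ofReal (|a| ^ max (t - 1) 0)) :=
            mul_le_mul_right le_self_add _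
  · -- case 1 ≤ t
    have hmax : max (t - 1) 0 = t - 1 := max_eq_left (by linarith)
    set J := ∫⁻ x : ℝ, ENNReal.ofReal ‖φ x‖ * ENNReal.ofReal (|x| ^ (t - 1)) with hJ
    set L := ∫⁻ x : ℝ, ENNReal.ofReal ‖φ x‖ with hLdef
    have hJfin : J ≠ ⊤ := (J_lt_top φ (by linarith)).ne
    refine ⟨ENNReal.ofReal (2 ^ (t - 1)) * (J + L), ?_, ?_⟩
    · exact ENNReal.mul_ne_top ENNReal.ofReal_ne_top
        (ENNReal.add_ne_top.2 ⟨hJfin, hL.ne⟩)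
    · intro a
      rw [hmax]
      set x := ENNReal.ofReal (|a| ^ (t - 1)) with hx
      have hpt : ∀ y : ℝ,
          ENNReal.ofReal ‖φ (y + a)‖ * ENNReal.ofReal (|y| ^ (t - 1))
            ≤ ENNReal.ofReal (2 ^ (t - 1)) *
              ((ENNReal.ofReal ‖φ (y + a)‖ * ENNReal.ofReal (|y + a| ^ (t - 1)))
                + ENNReal.ofReal ‖φ (y + a)‖ * x) := by
        intro y
        have h2 : |y| ≤ |y + a| + |a| := by
          have := abs_add_le (y + a) (-a)
          simpa using this
        have h1 : |y| ^ (t - 1) ≤ 2 ^ (t - 1) * (|y + a| ^ (t - 1) + |a| ^ (t - 1)) :=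
          le_trans (Real.rpow_le_rpow (abs_nonneg y) h2 (by linarith))
            (two_bound (by linarith) (abs_nonneg _) (abs_nonneg _))
        calc ENNReal.ofReal ‖φ (y + a)‖ * ENNReal.ofReal (|y| ^ (t - 1))
            ≤ ENNReal.ofReal ‖φ (y + a)‖ *
                ENNReal.ofReal (2 ^ (t - 1) * (|y + a| ^ (t - 1) + |a| ^ (t - 1))) :=
              mul_le_mul_right (ENNReal.ofReal_le_ofReal h1) _
          _ = ENNReal.ofReal ‖φ (y + a)‖ * (ENNReal.ofReal (2 ^ (t - 1)) *
                (ENNReal.ofReal (|y + a| ^ (t - 1)) + ENNReal.ofReal (|a| ^ (t - 1)))) := by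
              rw [ENNReal.ofReal_mul (by positivity),
                ENNReal.ofReal_add (by positivity) (by positivity)]
          _ = ENNReal.ofReal (2 ^ (t - 1)) *
              ((ENNReal.ofReal ‖φ (y + a)‖ * ENNReal.ofReal (|y + a| ^ (t - 1)))
                + ENNReal.ofReal ‖φ (y + a)‖ * x) := by
              rw [hx]; ring
      have hmeas1 : Measurable fun y : ℝ =>
          ENNReal.ofReal ‖φ (y + a)‖ * ENNReal.ofReal (|y + a| ^ (t - 1)) :=
        (meas_J φ (t - 1)).comp (measurable_add_const a)
      calc G φ t a
          ≤ ∫⁻ y : ℝ, ENNReal.ofReal (2 ^ (t - 1)) *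
              ((ENNReal.ofReal ‖φ (y + a)‖ * ENNReal.ofReal (|y + a| ^ (t - 1)))
                + ENNReal.ofReal ‖φ (y + a)‖ * x) := lintegral_mono hpt
        _ = ENNReal.ofReal (2 ^ (t - 1)) *
            ((∫⁻ y : ℝ, ENNReal.ofReal ‖φ (y + a)‖ * ENNReal.ofReal (|y + a| ^ (t - 1)))
              + ∫⁻ y : ℝ, ENNReal.ofReal ‖φ (y + a)‖ * x) := by
            rw [lintegral_const_mul' _ _ ENNReal.ofReal_ne_top,
              lintegral_add_left hmeas1]
        _ = ENNReal.ofReal (2 ^ (t - 1)) * (J + L * x) := by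
            congr 1
            congr 1
            · exact lintegral_add_right_eq_self
                (fun u => ENNReal.ofReal ‖φ u‖ * ENNReal.ofReal (|u| ^ (t - 1))) a
            · rw [lintegral_mul_const' x _ ENNReal.ofReal_ne_top]
              congr 1
              exact lintegral_add_right_eq_self (fun u => ENNReal.ofReal ‖φ u‖) a
        _ ≤ ENNReal.ofReal (2 ^ (t - 1)) * ((J + L) * (1 + x)) := by
            apply mul_le_mul_right
            rw [mul_add, mul_one]
            exact add_le_add le_self_add (mul_le_mul_left le_add_self x)
        _ = ENNReal.ofReal (2 ^ (t - 1)) * (J + L) * (1 + x) := by ring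

lemma integrand_aesm (φ : SchwartzMap ℝ ℂ) (t a : ℝ) :
    AEStronglyMeasurable (fun y : ℝ => ‖φ (y + a)‖ * |y| ^ (t - 1)) volume :=
  (((φ.continuous.comp (continuous_add_right a)).norm.measurable).mul
    ((measurable_rpow_const (t - 1)).comp measurable_abs)).aestronglyMeasurable

lemma integral_eq_G (φ : SchwartzMap ℝ ℂ) (t a : ℝ) :
    (∫ y : ℝ, ‖φ (y + a)‖ * |y| ^ (t - 1)) = (G φ t a).toReal := by
  rw [integral_eq_lintegral_of_nonneg_ae
    (ae_of_all _ fun y => by positivity) (integrand_aesm φ t a)]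
  congr 1
  apply lintegral_congr
  intro y
  rw [ENNReal.ofReal_mul (norm_nonneg _)]

end Stmt16Aux

open Stmt16Aux Set

/-- Lemma 3.1 of the paper, real place: elementary bounds for
`∫ |φ(y+a)| |y|^{t₂-1} dy` for Schwartz `φ`, and the resulting absolute
convergence of the archimedean local zeta integral
`∫_{ℝ³} |x₁|^{t₁-1} |x₁₂² - x₁x₂|^{t₂-1} |φ₁(x₁)φ₂(x₁₂)φ₃(x₂)| dx`
for `t₁ > 1/2`, `t₂ > 0`, `t₁ + t₂/2 > 1`. -/
theorem stmt_16 :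
    -- (a) uniform bound for bounded shifts
    (∀ (φ : SchwartzMap ℝ ℂ) (M t₂ : ℝ), 0 < t₂ → ∃ C : ℝ, ∀ a : ℝ, |a| ≤ M →
      (∫ y : ℝ, ‖φ (y + a)‖ * |y| ^ (t₂ - 1)) ≤ C) ∧
    -- (b) bounds for large shifts
    (∀ (φ : SchwartzMap ℝ ℂ) (M t₂ : ℝ), 0 < M → 0 < t₂ → ∃ C : ℝ, ∀ a : ℝ, M ≤ |a| →
      (1 ≤ t₂ →
        (∫ y : ℝ, ‖φ (y + a)‖ * |y| ^ (t₂ - 1)) ≤ C * (1 + |a| ^ (t₂ - 1 / 2))) ∧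
      (t₂ ≤ 1 →
        (∫ y : ℝ, ‖φ (y + a)‖ * |y| ^ (t₂ - 1)) ≤ C * (1 + |a| ^ (t₂ / 2)))) ∧
    -- consequence: convergence of the local zeta integral
    (∀ (φ₁ φ₂ φ₃ : SchwartzMap ℝ ℂ) (t₁ t₂ : ℝ),
      1 / 2 < t₁ → 0 < t₂ → 1 < t₁ + t₂ / 2 →
      Integrable (fun x : ℝ × ℝ × ℝ =>
        |x.1| ^ (t₁ - 1) * |x.2.1 ^ 2 - x.1 * x.2.2| ^ (t₂ - 1) *
          (‖φ₁ x.1‖ * ‖φ₂ x.2.1‖ * ‖φ₃ x.2.2‖))) := by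
  refine ⟨?_, ?_, ?_⟩
  · -- part (a)
    intro φ M t₂ ht₂
    obtain ⟨C, hC, hb⟩ := master φ ht₂
    set p := max (t₂ - 1) 0 with hp
    have hp0 : (0 : ℝ) ≤ p := le_max_right _ _
    set M' := max M 0 with hM'
    refine ⟨(C * (1 + ENNReal.ofReal (M' ^ p))).toReal, fun a ha => ?_⟩
    rw [integral_eq_G]
    apply ENNReal.toReal_mono
    · exact ENNReal.mul_ne_top hC
        (ENNReal.add_ne_top.2 ⟨ENNReal.one_ne_top, ENNReal.ofReal_ne_top⟩)
    · calc G φ t₂ a ≤ C * (1 + ENNReal.ofReal (|a| ^ p)) := hb a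
        _ ≤ C * (1 + ENNReal.ofReal (M' ^ p)) := by
            apply mul_le_mul_right
            apply add_le_add_right
            apply ENNReal.ofReal_le_ofReal
            exact Real.rpow_le_rpow (abs_nonneg a)
              (le_trans ha (le_max_left M 0)) hp0
  · -- part (b)
    intro φ M t₂ hM ht₂
    obtain ⟨C, hC, hb⟩ := master φ ht₂
    set c₀ := C.toReal with hc₀
    have hc₀0 : 0 ≤ c₀ := ENNReal.toReal_nonneg
    set m := M ^ (-(1 / 2) : ℝ) with hm
    have hm0 : 0 ≤ m := Real.rpow_nonneg hM.le _
    set C₁ := c₀ * (1 + m) with hC₁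
    set C₂ := 2 * c₀ with hC₂
    have hC₁0 : 0 ≤ C₁ := by positivity
    have hC₂0 : 0 ≤ C₂ := by positivity
    refine ⟨max C₁ C₂, fun a ha => ⟨?_, ?_⟩⟩
    · -- 1 ≤ t₂
      intro h1t
      have hmax : max (t₂ - 1) 0 = t₂ - 1 := max_eq_left (by linarith)
      have ha0 : (0 : ℝ) < |a| := lt_of_lt_of_le hM ha
      have hGa := hb a
      rw [hmax] at hGa
      have hfin : C * (1 + ENNReal.ofReal (|a| ^ (t₂ - 1))) ≠ ⊤ :=
        ENNReal.mul_ne_top hC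
          (ENNReal.add_ne_top.2 ⟨ENNReal.one_ne_top, ENNReal.ofReal_ne_top⟩)
      rw [integral_eq_G]
      have h2 : (G φ t₂ a).toReal ≤ c₀ * (1 + |a| ^ (t₂ - 1)) := by
        have := ENNReal.toReal_mono hfin hGa
        rwa [ENNReal.toReal_mul, ENNReal.toReal_add ENNReal.one_ne_top
          ENNReal.ofReal_ne_top, ENNReal.toReal_one,
          ENNReal.toReal_ofReal (Real.rpow_nonneg (abs_nonneg a) _)] at this
      refine le_trans h2 ?_
      have e1 : |a| ^ (t₂ - 1) = |a| ^ (t₂ - 1 / 2) * |a| ^ (-(1 / 2) : ℝ) := by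
        rw [← Real.rpow_add ha0]
        congr 1
        ring
      have e2 : |a| ^ (-(1 / 2) : ℝ) ≤ m :=
        Real.rpow_le_rpow_of_nonpos hM ha (by norm_num)
      have hB0 : 0 ≤ |a| ^ (t₂ - 1 / 2) := Real.rpow_nonneg (abs_nonneg a) _
      have hA : |a| ^ (t₂ - 1) ≤ |a| ^ (t₂ - 1 / 2) * m := by
        rw [e1]
        exact mul_le_mul_of_nonneg_left e2 hB0
      have hmaxC : C₁ ≤ max C₁ C₂ := le_max_left _ _
      calc c₀ * (1 + |a| ^ (t₂ - 1))
          ≤ c₀ * (1 + |a| ^ (t₂ - 1 / 2) * m) := by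
            nlinarith [mul_le_mul_of_nonneg_left hA hc₀0]
        _ ≤ C₁ * (1 + |a| ^ (t₂ - 1 / 2)) := by
            rw [hC₁]
            nlinarith [mul_nonneg hc₀0 hm0, mul_nonneg hc₀0 hB0,
              mul_nonneg (mul_nonneg hc₀0 hm0) hB0]
        _ ≤ max C₁ C₂ * (1 + |a| ^ (t₂ - 1 / 2)) :=
            mul_le_mul_of_nonneg_right hmaxC (by positivity)
    · -- t₂ ≤ 1
      intro h1t
      have hmax : max (t₂ - 1) 0 = 0 := max_eq_right (by linarith)
      have hGa := hb a
      rw [hmax, Real.rpow_zero, ENNReal.ofReal_one] at hGa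
      have hfin : C * (1 + 1) ≠ ⊤ :=
        ENNReal.mul_ne_top hC (by norm_num)
      rw [integral_eq_G]
      have h2 : (G φ t₂ a).toReal ≤ c₀ * 2 := by
        have := ENNReal.toReal_mono hfin hGa
        rwa [ENNReal.toReal_mul, show ((1 : ℝ≥0∞) + 1) = 2 by norm_num,
          ENNReal.toReal_ofNat] at this
      refine le_trans h2 ?_
      have hB0 : 0 ≤ |a| ^ (t₂ / 2) := Real.rpow_nonneg (abs_nonneg a) _
      have hmaxC : C₂ ≤ max C₁ C₂ := le_max_right _ _
      calc c₀ * 2 ≤ C₂ * (1 + |a| ^ (t₂ / 2)) := by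
            rw [hC₂]
            nlinarith [mul_nonneg hC₂0 hB0, hC₂]
        _ ≤ max C₁ C₂ * (1 + |a| ^ (t₂ / 2)) :=
            mul_le_mul_of_nonneg_right hmaxC (by positivity)
  · -- part (c)
    intro φ₁ φ₂ φ₃ t₁ t₂ ht₁ ht₂ htt
    set p := max (t₂ - 1) 0 with hp
    have hp0 : (0 : ℝ) ≤ p := le_max_right _ _
    obtain ⟨C, hC, hkey⟩ := master φ₃ ht₂
    have htsum : (1 : ℝ) < t₁ + t₂ := by linarith
    -- measurability of the real integrand
    have m1 : Measurable fun x : ℝ × ℝ × ℝ => |x.1| ^ (t₁ - 1) :=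
      (measurable_rpow_const (t₁ - 1)).comp measurable_fst.abs
    have m2 : Measurable fun x : ℝ × ℝ × ℝ => |x.2.1 ^ 2 - x.1 * x.2.2| ^ (t₂ - 1) :=
      (measurable_rpow_const (t₂ - 1)).comp
        ((((measurable_fst.comp measurable_snd).pow_const 2).sub
          (measurable_fst.mul (measurable_snd.comp measurable_snd))).abs)
    have m3 : Measurable fun x : ℝ × ℝ × ℝ => ‖φ₁ x.1‖ :=
      (φ₁.continuous.comp continuous_fst).norm.measurable
    have m4 : Measurable fun x : ℝ × ℝ × ℝ => ‖φ₂ x.2.1‖ :=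
      (φ₂.continuous.comp (continuous_fst.comp continuous_snd)).norm.measurable
    have m5 : Measurable fun x : ℝ × ℝ × ℝ => ‖φ₃ x.2.2‖ :=
      (φ₃.continuous.comp (continuous_snd.comp continuous_snd)).norm.measurable
    have hfmeas : Measurable fun x : ℝ × ℝ × ℝ =>
        |x.1| ^ (t₁ - 1) * |x.2.1 ^ 2 - x.1 * x.2.2| ^ (t₂ - 1) *
          (‖φ₁ x.1‖ * ‖φ₂ x.2.1‖ * ‖φ₃ x.2.2‖) :=
      (m1.mul m2).mul ((m3.mul m4).mul m5)
    refine ⟨hfmeas.aestronglyMeasurable, ?_⟩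
    rw [hasFiniteIntegral_iff_ofReal (ae_of_all _ fun x => by positivity)]
    -- the ENNReal-valued integrand
    set E : ℝ × ℝ × ℝ → ℝ≥0∞ := fun x =>
      (ENNReal.ofReal (|x.1| ^ (t₁ - 1)) * ENNReal.ofReal ‖φ₁ x.1‖ *
        ENNReal.ofReal ‖φ₂ x.2.1‖) *
      (ENNReal.ofReal (|x.2.1 ^ 2 - x.1 * x.2.2| ^ (t₂ - 1)) *
        ENNReal.ofReal ‖φ₃ x.2.2‖) with hEdef
    have hE : ∀ x : ℝ × ℝ × ℝ,
        ENNReal.ofReal (|x.1| ^ (t₁ - 1) * |x.2.1 ^ 2 - x.1 * x.2.2| ^ (t₂ - 1) *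
          (‖φ₁ x.1‖ * ‖φ₂ x.2.1‖ * ‖φ₃ x.2.2‖)) = E x := by
      intro x
      rw [hEdef]
      rw [ENNReal.ofReal_mul (by positivity), ENNReal.ofReal_mul (by positivity),
        ENNReal.ofReal_mul (by positivity), ENNReal.ofReal_mul (by positivity)]
      ring
    have hEmeas : Measurable E := by
      rw [hEdef]
      apply Measurable.fun_mul
      · exact ((m1.ennreal_ofReal.mul m3.ennreal_ofReal).mul m4.ennreal_ofReal)
      · exact (m2.ennreal_ofReal.mul m5.ennreal_ofReal)
    -- one-variable pieces
    set A₁ : ℝ → ℝ≥0∞ := fun x₁ =>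
      ENNReal.ofReal ‖φ₁ x₁‖ * ENNReal.ofReal (|x₁| ^ (t₁ + t₂ - 2)) with hA₁
    set A₂ : ℝ → ℝ≥0∞ := fun x₁ =>
      ENNReal.ofReal ‖φ₁ x₁‖ * ENNReal.ofReal (|x₁| ^ (t₁ + t₂ - 2 - p)) with hA₂
    set B₁ : ℝ → ℝ≥0∞ := fun x₁₂ => ENNReal.ofReal ‖φ₂ x₁₂‖ with hB₁
    set B₂ : ℝ → ℝ≥0∞ := fun x₁₂ =>
      ENNReal.ofReal ‖φ₂ x₁₂‖ * ENNReal.ofReal (|x₁₂| ^ (2 * p)) with hB₂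
    have mA₁ : Measurable A₁ := meas_J φ₁ _
    have mA₂ : Measurable A₂ := meas_J φ₁ _
    have mB₁ : Measurable B₁ := φ₂.continuous.norm.measurable.ennreal_ofReal
    have mB₂ : Measurable B₂ := meas_J φ₂ _
    have hA₁ne : ∀ x₁, A₁ x₁ ≠ ⊤ := fun x₁ =>
      ENNReal.mul_ne_top ENNReal.ofReal_ne_top ENNReal.ofReal_ne_top
    have hA₂ne : ∀ x₁, A₂ x₁ ≠ ⊤ := fun x₁ =>
      ENNReal.mul_ne_top ENNReal.ofReal_ne_top ENNReal.ofReal_ne_top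
    -- the inner bound
    have inner_bound : ∀ x₁ : ℝ, x₁ ≠ 0 → ∀ x₁₂ : ℝ,
        (∫⁻ x₂ : ℝ, E (x₁, x₁₂, x₂)) ≤ C * (A₁ x₁ * B₁ x₁₂ + A₂ x₁ * B₂ x₁₂) := by
      intro x₁ hx₁ x₁₂
      have hx₁pos : (0 : ℝ) < |x₁| := abs_pos.mpr hx₁
      set c := x₁₂ ^ 2 / x₁ with hc
      set K := ENNReal.ofReal (|x₁| ^ (t₁ - 1)) * ENNReal.ofReal ‖φ₁ x₁‖ *
        ENNReal.ofReal ‖φ₂ x₁₂‖ with hK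
      have hKne : K ≠ ⊤ :=
        ENNReal.mul_ne_top (ENNReal.mul_ne_top ENNReal.ofReal_ne_top
          ENNReal.ofReal_ne_top) ENNReal.ofReal_ne_top
      have habs : ∀ x₂ : ℝ, |x₁₂ ^ 2 - x₁ * x₂| = |x₁| * |x₂ - c| := by
        intro x₂
        have h : x₁₂ ^ 2 - x₁ * x₂ = x₁ * (c - x₂) := by
          rw [hc, mul_sub, mul_div_assoc', mul_comm x₁ (x₁₂ ^ 2), mul_div_assoc, div_self hx₁,
            mul_one]
        rw [h, abs_mul, abs_sub_comm]
      have hcore : ∀ x₂ : ℝ,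
          ENNReal.ofReal (|x₁₂ ^ 2 - x₁ * x₂| ^ (t₂ - 1)) * ENNReal.ofReal ‖φ₃ x₂‖
            = ENNReal.ofReal (|x₁| ^ (t₂ - 1)) *
              (ENNReal.ofReal (|x₂ - c| ^ (t₂ - 1)) * ENNReal.ofReal ‖φ₃ x₂‖) := by
        intro x₂
        rw [habs x₂, Real.mul_rpow (abs_nonneg _) (abs_nonneg _),
          ENNReal.ofReal_mul (by positivity), mul_assoc]
      have htr : (∫⁻ x₂ : ℝ, ENNReal.ofReal (|x₂ - c| ^ (t₂ - 1)) *
          ENNReal.ofReal ‖φ₃ x₂‖) = G φ₃ t₂ c := by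
        rw [← lintegral_add_right_eq_self
          (fun x₂ => ENNReal.ofReal (|x₂ - c| ^ (t₂ - 1)) * ENNReal.ofReal ‖φ₃ x₂‖) c]
        simp only [add_sub_cancel_right]
        exact lintegral_congr fun y => mul_comm _ _
      have hIcalc : (∫⁻ x₂ : ℝ, E (x₁, x₁₂, x₂))
          = K * (ENNReal.ofReal (|x₁| ^ (t₂ - 1)) * G φ₃ t₂ c) := by
        calc (∫⁻ x₂ : ℝ, E (x₁, x₁₂, x₂))
            = ∫⁻ x₂ : ℝ, K * (ENNReal.ofReal (|x₁₂ ^ 2 - x₁ * x₂| ^ (t₂ - 1)) *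
                ENNReal.ofReal ‖φ₃ x₂‖) := rfl
          _ = K * ∫⁻ x₂ : ℝ, ENNReal.ofReal (|x₁₂ ^ 2 - x₁ * x₂| ^ (t₂ - 1)) *
                ENNReal.ofReal ‖φ₃ x₂‖ := lintegral_const_mul' _ _ hKne
          _ = K * ∫⁻ x₂ : ℝ, ENNReal.ofReal (|x₁| ^ (t₂ - 1)) *
                (ENNReal.ofReal (|x₂ - c| ^ (t₂ - 1)) * ENNReal.ofReal ‖φ₃ x₂‖) := by
              congr 1
              exact lintegral_congr hcore
          _ = K * (ENNReal.ofReal (|x₁| ^ (t₂ - 1)) *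
                ∫⁻ x₂ : ℝ, ENNReal.ofReal (|x₂ - c| ^ (t₂ - 1)) *
                  ENNReal.ofReal ‖φ₃ x₂‖) := by
              rw [lintegral_const_mul' _ _ ENNReal.ofReal_ne_top]
          _ = K * (ENNReal.ofReal (|x₁| ^ (t₂ - 1)) * G φ₃ t₂ c) := by rw [htr]
      rw [hIcalc]
      have hstep : K * (ENNReal.ofReal (|x₁| ^ (t₂ - 1)) * G φ₃ t₂ c)
          ≤ K * (ENNReal.ofReal (|x₁| ^ (t₂ - 1)) *
            (C * (1 + ENNReal.ofReal (|c| ^ p)))) :=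
        mul_le_mul_right (mul_le_mul_right (hkey c) _) _
      refine le_trans hstep (le_of_eq ?_)
      -- identify the right-hand side
      have f1 : ENNReal.ofReal (|x₁| ^ (t₁ - 1)) * ENNReal.ofReal (|x₁| ^ (t₂ - 1))
          = ENNReal.ofReal (|x₁| ^ (t₁ + t₂ - 2)) := by
        rw [← ENNReal.ofReal_mul (by positivity), ← Real.rpow_add hx₁pos]
        congr 1
        ring
      have f2 : ENNReal.ofReal (|c| ^ p)
          = ENNReal.ofReal (|x₁₂| ^ (2 * p)) * ENNReal.ofReal (|x₁| ^ (-p)) := by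
        have hcabs : |c| = |x₁₂| ^ (2 : ℕ) * |x₁|⁻¹ := by
          rw [hc, abs_div, div_eq_mul_inv, pow_abs]
        have h3 : |c| ^ p = |x₁₂| ^ (2 * p) * |x₁| ^ (-p) := by
          rw [hcabs, Real.mul_rpow (by positivity) (by positivity)]
          congr 1
          · rw [← Real.rpow_natCast |x₁₂| 2, ← Real.rpow_mul (abs_nonneg _)]
            norm_num
          · rw [Real.inv_rpow (abs_nonneg _), ← Real.rpow_neg (abs_nonneg _)]
        rw [h3, ENNReal.ofReal_mul (by positivity)]
      have f3 : ENNReal.ofReal (|x₁| ^ (t₁ + t₂ - 2)) * ENNReal.ofReal (|x₁| ^ (-p))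
          = ENNReal.ofReal (|x₁| ^ (t₁ + t₂ - 2 - p)) := by
        rw [← ENNReal.ofReal_mul (by positivity), ← Real.rpow_add hx₁pos]
        congr 1
      set W := K * ENNReal.ofReal (|x₁| ^ (t₂ - 1)) with hW
      have e2 : W = ENNReal.ofReal ‖φ₁ x₁‖ * ENNReal.ofReal ‖φ₂ x₁₂‖ *
          ENNReal.ofReal (|x₁| ^ (t₁ + t₂ - 2)) := by
        calc W = ENNReal.ofReal ‖φ₁ x₁‖ * ENNReal.ofReal ‖φ₂ x₁₂‖ *
            (ENNReal.ofReal (|x₁| ^ (t₁ - 1)) * ENNReal.ofReal (|x₁| ^ (t₂ - 1))) := by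
              rw [hW, hK]; ring
          _ = _ := by rw [f1]
      have e3 : W * ENNReal.ofReal (|c| ^ p)
          = ENNReal.ofReal ‖φ₁ x₁‖ * ENNReal.ofReal (|x₁| ^ (t₁ + t₂ - 2 - p)) *
            (ENNReal.ofReal ‖φ₂ x₁₂‖ * ENNReal.ofReal (|x₁₂| ^ (2 * p))) := by
        calc W * ENNReal.ofReal (|c| ^ p)
            = ENNReal.ofReal ‖φ₁ x₁‖ *
              (ENNReal.ofReal (|x₁| ^ (t₁ + t₂ - 2)) * ENNReal.ofReal (|x₁| ^ (-p))) *
              (ENNReal.ofReal ‖φ₂ x₁₂‖ * ENNReal.ofReal (|x₁₂| ^ (2 * p))) := by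
              rw [e2, f2]; ring
          _ = _ := by rw [f3]
      calc K * (ENNReal.ofReal (|x₁| ^ (t₂ - 1)) * (C * (1 + ENNReal.ofReal (|c| ^ p))))
          = C * (W + W * ENNReal.ofReal (|c| ^ p)) := by rw [hW]; ring
        _ = C * (A₁ x₁ * B₁ x₁₂ + A₂ x₁ * B₂ x₁₂) := by
            rw [e3, e2, hA₁, hA₂, hB₁, hB₂]; ring
    -- Tonelli
    have step : (∫⁻ x : ℝ × ℝ × ℝ, E x)
        = ∫⁻ x₁ : ℝ, ∫⁻ x₁₂ : ℝ, ∫⁻ x₂ : ℝ, E (x₁, x₁₂, x₂) := by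
      rw [MeasureTheory.Measure.volume_eq_prod, lintegral_prod _ hEmeas.aemeasurable]
      apply lintegral_congr
      intro x₁
      have hmx : Measurable fun w : ℝ × ℝ => E (x₁, w) :=
        hEmeas.comp measurable_prodMk_left
      rw [MeasureTheory.Measure.volume_eq_prod]
      exact lintegral_prod _ hmx.aemeasurable
    -- finiteness of the one-variable integrals
    have hIA₁ : (∫⁻ x₁ : ℝ, A₁ x₁) < ⊤ := J_lt_top φ₁ (by linarith)
    have hIA₂ : (∫⁻ x₁ : ℝ, A₂ x₁) < ⊤ := by
      apply J_lt_top φ₁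
      rcases max_cases (t₂ - 1) 0 with ⟨h1, h2⟩ | ⟨h1, h2⟩ <;> rw [hp, h1] <;> linarith
    have hIB₁ : (∫⁻ x₁₂ : ℝ, B₁ x₁₂) < ⊤ :=
      ((φ₂.integrable (μ := volume)).norm).lintegral_lt_top
    have hIB₂ : (∫⁻ x₁₂ : ℝ, B₂ x₁₂) < ⊤ := J_lt_top φ₂ (by linarith)
    -- assembling
    have mid : ∀ x₁ : ℝ, x₁ ≠ 0 →
        (∫⁻ x₁₂ : ℝ, ∫⁻ x₂ : ℝ, E (x₁, x₁₂, x₂))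
          ≤ C * (A₁ x₁ * (∫⁻ x₁₂ : ℝ, B₁ x₁₂) + A₂ x₁ * (∫⁻ x₁₂ : ℝ, B₂ x₁₂)) := by
      intro x₁ hx₁
      calc (∫⁻ x₁₂ : ℝ, ∫⁻ x₂ : ℝ, E (x₁, x₁₂, x₂))
          ≤ ∫⁻ x₁₂ : ℝ, C * (A₁ x₁ * B₁ x₁₂ + A₂ x₁ * B₂ x₁₂) :=
            lintegral_mono (inner_bound x₁ hx₁)
        _ = C * (A₁ x₁ * (∫⁻ x₁₂ : ℝ, B₁ x₁₂) + A₂ x₁ * (∫⁻ x₁₂ : ℝ, B₂ x₁₂)) := by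
            rw [lintegral_const_mul' _ _ hC,
              lintegral_add_left (mB₁.const_mul _),
              lintegral_const_mul' _ _ (hA₁ne x₁),
              lintegral_const_mul' _ _ (hA₂ne x₁)]
    have hae : ∀ᵐ x₁ : ℝ, x₁ ≠ (0 : ℝ) := by
      rw [ae_iff]
      have : {x₁ : ℝ | ¬x₁ ≠ 0} = {0} := by
        ext x; simp
      rw [this]
      exact measure_singleton 0
    have final : (∫⁻ x : ℝ × ℝ × ℝ, E x)
        ≤ C * ((∫⁻ x₁ : ℝ, A₁ x₁) * (∫⁻ x₁₂ : ℝ, B₁ x₁₂)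
          + (∫⁻ x₁ : ℝ, A₂ x₁) * (∫⁻ x₁₂ : ℝ, B₂ x₁₂)) := by
      rw [step]
      calc (∫⁻ x₁ : ℝ, ∫⁻ x₁₂ : ℝ, ∫⁻ x₂ : ℝ, E (x₁, x₁₂, x₂))
          ≤ ∫⁻ x₁ : ℝ, C * (A₁ x₁ * (∫⁻ x₁₂ : ℝ, B₁ x₁₂)
              + A₂ x₁ * (∫⁻ x₁₂ : ℝ, B₂ x₁₂)) :=
            lintegral_mono_ae (hae.mono fun x₁ hx₁ => mid x₁ hx₁)
        _ = C * ((∫⁻ x₁ : ℝ, A₁ x₁) * (∫⁻ x₁₂ : ℝ, B₁ x₁₂)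
            + (∫⁻ x₁ : ℝ, A₂ x₁) * (∫⁻ x₁₂ : ℝ, B₂ x₁₂)) := by
            rw [lintegral_const_mul' _ _ hC,
              lintegral_add_left (mA₁.mul_const _),
              lintegral_mul_const' _ _ hIB₁.ne,
              lintegral_mul_const' _ _ hIB₂.ne]
    calc (∫⁻ x : ℝ × ℝ × ℝ, ENNReal.ofReal
          (|x.1| ^ (t₁ - 1) * |x.2.1 ^ 2 - x.1 * x.2.2| ^ (t₂ - 1) *
            (‖φ₁ x.1‖ * ‖φ₂ x.2.1‖ * ‖φ₃ x.2.2‖)))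
        = ∫⁻ x : ℝ × ℝ × ℝ, E x := lintegral_congr hE
      _ ≤ C * ((∫⁻ x₁ : ℝ, A₁ x₁) * (∫⁻ x₁₂ : ℝ, B₁ x₁₂)
          + (∫⁻ x₁ : ℝ, A₂ x₁) * (∫⁻ x₁₂ : ℝ, B₂ x₁₂)) := final
      _ < ⊤ := by
          apply ENNReal.mul_lt_top hC.lt_top
          apply ENNReal.add_lt_top.2
          exact ⟨ENNReal.mul_lt_top hIA₁ hIB₁, ENNReal.mul_lt_top hIA₂ hIB₂⟩
end
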